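/- There exists a connected graph G with σ⁻(G) = 2 all of whose spanning trees T satisfy σ⁻(T) = 1; for example, the graph on 5 vertices consisting of a triangle with one pendant vertex attached to each of two distinct triangle vertices has this property. -/
import Mathlib


open SimpleGraph

variable {V : Type*}

/-- The set of "negative" edges of `G` under the parity labeling induced by
the bijection `f : V ≃ Fin (Fintype.card V)`: edges whose endpoint labels
have opposite parity. -/
def negSet [Fintype V] (G : SimpleGraph V) (f : V ≃ Fin (Fintype.card V)) : Set (Sym2 V) :=
  {e ∈ G.edgeSet |
    Sym2.lift ⟨fun u v => ((f u : ℕ) % 2 ≠ (f v : ℕ) % 2), fun u v => propext ne_comm⟩ e}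

/-- The number of negative edges under the labeling `f`. -/
noncomputable def negCount [Fintype V] (G : SimpleGraph V) (f : V ≃ Fin (Fintype.card V)) : ℕ :=
  (negSet G f).ncard

/-- The rna number of `G`: the minimum number of negative edges over all parity labelings. -/
noncomputable def rna [Fintype V] (G : SimpleGraph V) : ℕ :=
  sInf (Set.range (negCount G))

/-- `C(G)`: minimum of `||S₁| − |S₂||` over partitions of the vertex set into two
nonempty parts each inducing a connected subgraph. -/
noncomputable def Cval [Fintype V] (G : SimpleGraph V) : ℕ :=
  sInf {d | ∃ S : Set V, S.Nonempty ∧ Sᶜ.Nonempty ∧ (G.induce S).Connected ∧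
    (G.induce Sᶜ).Connected ∧ d = ((S.ncard : ℤ) - (Sᶜ.ncard : ℤ)).natAbs}

/-- `G` is a star: some center `c` is adjacent exactly to all other vertices,
with no other edges. -/
def IsStar (G : SimpleGraph V) : Prop :=
  ∃ c : V, ∀ a b : V, G.Adj a b ↔ (a ≠ b ∧ (a = c ∨ b = c))

/-- The triangle 0,1,2 with pendant vertices 3 (attached to 0) and 4 (attached to 1). -/
def counterexampleGraph : SimpleGraph (Fin 5) :=
  SimpleGraph.fromRel (fun a b =>
    (a = 0 ∧ b = 1) ∨ (a = 1 ∧ b = 2) ∨ (a = 0 ∧ b = 2) ∨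
    (a = 0 ∧ b = 3) ∨ (a = 1 ∧ b = 4))

/- ### Auxiliary machinery -/

instance : DecidableRel counterexampleGraph.Adj := fun a b =>
  decidable_of_iff' _ (SimpleGraph.fromRel_adj _ a b)

instance liftDec [Fintype V] (f : V ≃ Fin (Fintype.card V)) (e : Sym2 V) :
    Decidable (Sym2.lift ⟨fun u v => ((f u : ℕ) % 2 ≠ (f v : ℕ) % 2),
      fun u v => propext ne_comm⟩ e) :=
  Quot.recOnSubsingleton e
    (fun p => inferInstanceAs (Decidable ((f p.1 : ℕ) % 2 ≠ (f p.2 : ℕ) % 2)))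

instance negSetDec [Fintype V] (G : SimpleGraph V) [DecidableRel G.Adj]
    (f : V ≃ Fin (Fintype.card V)) : DecidablePred (· ∈ negSet G f) := fun _ =>
  inferInstanceAs (Decidable (_ ∧ _))

lemma negCount_eq [Fintype V] (G : SimpleGraph V) [DecidableRel G.Adj]
    (f : V ≃ Fin (Fintype.card V)) :
    negCount G f = (Finset.univ.filter (· ∈ negSet G f)).card := by
  rw [negCount, Set.ncard_eq_toFinset_card', Set.filter_mem_univ_eq_toFinset]

lemma rna_eq (G : SimpleGraph (Fin 5)) [DecidableRel G.Adj] (n : ℕ)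
    (f₀ : Fin 5 ≃ Fin (Fintype.card (Fin 5)))
    (h₀ : (Finset.univ.filter (· ∈ negSet G f₀)).card = n)
    (hlb : ∀ f : Fin 5 ≃ Fin (Fintype.card (Fin 5)),
      n ≤ (Finset.univ.filter (· ∈ negSet G f)).card) :
    rna G = n := by
  refine le_antisymm ?_ ?_
  · calc sInf (Set.range (negCount G)) ≤ negCount G f₀ := Nat.sInf_le ⟨f₀, rfl⟩
      _ = n := by rw [negCount_eq]; exact h₀
  · refine le_csInf ⟨negCount G f₀, ⟨f₀, rfl⟩⟩ ?_
    rintro m ⟨f, rfl⟩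
    rw [negCount_eq]
    exact hlb f

/-- All possible subgraphs of `counterexampleGraph` containing both pendant edges,
parameterized by which triangle edges are present. -/
def graphOf (a b c : Bool) : SimpleGraph (Fin 5) :=
  SimpleGraph.fromRel (fun x y =>
    (a = true ∧ x = 0 ∧ y = 1) ∨ (b = true ∧ x = 1 ∧ y = 2) ∨
    (c = true ∧ x = 0 ∧ y = 2) ∨ (x = 0 ∧ y = 3) ∨ (x = 1 ∧ y = 4))

instance (a b c : Bool) : DecidableRel (graphOf a b c).Adj := fun x y =>
  decidable_of_iff' _ (SimpleGraph.fromRel_adj _ x y)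

def lab0 : Fin 5 ≃ Fin (Fintype.card (Fin 5)) :=
  (⟨![0, 2, 4, 1, 3], ![0, 3, 1, 4, 2], by decide, by decide⟩ : Fin 5 ≃ Fin 5).trans
    (finCongr (Fintype.card_fin 5).symm)

def labA : Fin 5 ≃ Fin (Fintype.card (Fin 5)) :=
  (⟨![3, 2, 0, 1, 4], ![2, 3, 1, 0, 4], by decide, by decide⟩ : Fin 5 ≃ Fin 5).trans
    (finCongr (Fintype.card_fin 5).symm)

def labB : Fin 5 ≃ Fin (Fintype.card (Fin 5)) :=
  (⟨![0, 1, 2, 4, 3], ![0, 1, 2, 4, 3], by decide, by decide⟩ : Fin 5 ≃ Fin 5).trans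
    (finCongr (Fintype.card_fin 5).symm)

def labC : Fin 5 ≃ Fin (Fintype.card (Fin 5)) :=
  (⟨![1, 0, 2, 3, 4], ![1, 0, 2, 3, 4], by decide, by decide⟩ : Fin 5 ≃ Fin 5).trans
    (finCongr (Fintype.card_fin 5).symm)

set_option maxRecDepth 40000 in
lemma rna_counterexample : rna counterexampleGraph = 2 := by
  refine rna_eq _ 2 lab0 (by decide) ?_
  decide

set_option maxRecDepth 40000 in
lemma rna_ftt : rna (graphOf false true true) = 1 := by
  refine rna_eq _ 1 labA (by decide) ?_
  decide

set_option maxRecDepth 40000 in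
lemma rna_tft : rna (graphOf true false true) = 1 := by
  refine rna_eq _ 1 labB (by decide) ?_
  decide

set_option maxRecDepth 40000 in
lemma rna_ttf : rna (graphOf true true false) = 1 := by
  refine rna_eq _ 1 labC (by decide) ?_
  decide

set_option maxRecDepth 40000 in
/-- There is a connected graph with rna number 2 all of whose spanning trees
have rna number 1, namely `counterexampleGraph`. -/
theorem exists_rna_two_all_spanning_trees_one :
    counterexampleGraph.Connected ∧ rna counterexampleGraph = 2 ∧
      ∀ T : SimpleGraph (Fin 5), T ≤ counterexampleGraph → T.IsTree → rna T = 1 := by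
  refine ⟨?_, rna_counterexample, ?_⟩
  · have hr : ∀ v : Fin 5, counterexampleGraph.Reachable 0 v := by
      intro v
      fin_cases v
      · exact Reachable.refl _
      · exact (by decide : counterexampleGraph.Adj 0 1).reachable
      · exact (by decide : counterexampleGraph.Adj 0 2).reachable
      · exact (by decide : counterexampleGraph.Adj 0 3).reachable
      · exact Reachable.trans (by decide : counterexampleGraph.Adj 0 1).reachable
          (by decide : counterexampleGraph.Adj 1 4).reachable
    exact (connected_iff _).mpr ⟨fun u v => (hr u).symm.trans (hr v), ⟨0⟩⟩
  intro T hle hT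
  have hpre := hT.isConnected.preconnected
  have h03 : T.Adj 0 3 := by
    obtain ⟨w⟩ := hpre 3 0
    cases w with
    | cons h p =>
      have h5 : ∀ v : Fin 5, counterexampleGraph.Adj 3 v → v = 0 := by decide
      exact ((h5 _ (hle h)) ▸ h).symm
  have h14 : T.Adj 1 4 := by
    obtain ⟨w⟩ := hpre 4 1
    cases w with
    | cons h p =>
      have h5 : ∀ v : Fin 5, counterexampleGraph.Adj 4 v → v = 1 := by decide
      exact ((h5 _ (hle h)) ▸ h).symm
  letI : Fintype T.edgeSet := Fintype.ofFinite _
  have hcard : T.edgeSet.ncard + 1 = 5 := by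
    have h := hT.card_edgeFinset
    rw [Fintype.card_fin] at h
    rw [Set.ncard_eq_toFinset_card']
    exact h
  by_cases h01 : T.Adj 0 1 <;> by_cases h12 : T.Adj 1 2 <;> by_cases h02 : T.Adj 0 2
  · exfalso
    have hEq : T = graphOf true true true := by
      ext x y
      fin_cases x <;> fin_cases y <;>
        (simp only [graphOf, SimpleGraph.fromRel_adj]; constructor <;> intro h <;>
          first
            | decide
            | exact absurd h (by decide)
            | exact h01 | exact h01.symm | exact h12 | exact h12.symm
            | exact h02 | exact h02.symm | exact h03 | exact h03.symm
            | exact h14 | exact h14.symm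
            | exact absurd (hle h) (by decide)
            | exact absurd h h01 | exact absurd h.symm h01
            | exact absurd h h12 | exact absurd h.symm h12
            | exact absurd h h02 | exact absurd h.symm h02)
    rw [hEq] at hcard
    have h5 : (graphOf true true true).edgeSet.ncard ≠ 4 := by
      rw [Set.ncard_eq_toFinset_card']; decide
    omega
  · have hEq : T = graphOf true true false := by
      ext x y
      fin_cases x <;> fin_cases y <;>
        (simp only [graphOf, SimpleGraph.fromRel_adj]; constructor <;> intro h <;>
          first
            | decide
            | exact absurd h (by decide)
            | exact h01 | exact h01.symm | exact h12 | exact h12.symm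
            | exact h02 | exact h02.symm | exact h03 | exact h03.symm
            | exact h14 | exact h14.symm
            | exact absurd (hle h) (by decide)
            | exact absurd h h01 | exact absurd h.symm h01
            | exact absurd h h12 | exact absurd h.symm h12
            | exact absurd h h02 | exact absurd h.symm h02)
    rw [hEq]
    exact rna_ttf
  · have hEq : T = graphOf true false true := by
      ext x y
      fin_cases x <;> fin_cases y <;>
        (simp only [graphOf, SimpleGraph.fromRel_adj]; constructor <;> intro h <;>
          first
            | decide
            | exact absurd h (by decide)
            | exact h01 | exact h01.symm | exact h12 | exact h12.symm
            | exact h02 | exact h02.symm | exact h03 | exact h03.symm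
            | exact h14 | exact h14.symm
            | exact absurd (hle h) (by decide)
            | exact absurd h h01 | exact absurd h.symm h01
            | exact absurd h h12 | exact absurd h.symm h12
            | exact absurd h h02 | exact absurd h.symm h02)
    rw [hEq]
    exact rna_tft
  · exfalso
    have hEq : T = graphOf true false false := by
      ext x y
      fin_cases x <;> fin_cases y <;>
        (simp only [graphOf, SimpleGraph.fromRel_adj]; constructor <;> intro h <;>
          first
            | decide
            | exact absurd h (by decide)
            | exact h01 | exact h01.symm | exact h12 | exact h12.symm
            | exact h02 | exact h02.symm | exact h03 | exact h03.symm
            | exact h14 | exact h14.symm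
            | exact absurd (hle h) (by decide)
            | exact absurd h h01 | exact absurd h.symm h01
            | exact absurd h h12 | exact absurd h.symm h12
            | exact absurd h h02 | exact absurd h.symm h02)
    rw [hEq] at hcard
    have h5 : (graphOf true false false).edgeSet.ncard ≠ 4 := by
      rw [Set.ncard_eq_toFinset_card']; decide
    omega
  · have hEq : T = graphOf false true true := by
      ext x y
      fin_cases x <;> fin_cases y <;>
        (simp only [graphOf, SimpleGraph.fromRel_adj]; constructor <;> intro h <;>
          first
            | decide
            | exact absurd h (by decide)
            | exact h01 | exact h01.symm | exact h12 | exact h12.symm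
            | exact h02 | exact h02.symm | exact h03 | exact h03.symm
            | exact h14 | exact h14.symm
            | exact absurd (hle h) (by decide)
            | exact absurd h h01 | exact absurd h.symm h01
            | exact absurd h h12 | exact absurd h.symm h12
            | exact absurd h h02 | exact absurd h.symm h02)
    rw [hEq]
    exact rna_ftt
  · exfalso
    have hEq : T = graphOf false true false := by
      ext x y
      fin_cases x <;> fin_cases y <;>
        (simp only [graphOf, SimpleGraph.fromRel_adj]; constructor <;> intro h <;>
          first
            | decide
            | exact absurd h (by decide)
            | exact h01 | exact h01.symm | exact h12 | exact h12.symm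
            | exact h02 | exact h02.symm | exact h03 | exact h03.symm
            | exact h14 | exact h14.symm
            | exact absurd (hle h) (by decide)
            | exact absurd h h01 | exact absurd h.symm h01
            | exact absurd h h12 | exact absurd h.symm h12
            | exact absurd h h02 | exact absurd h.symm h02)
    rw [hEq] at hcard
    have h5 : (graphOf false true false).edgeSet.ncard ≠ 4 := by
      rw [Set.ncard_eq_toFinset_card']; decide
    omega
  · exfalso
    have hEq : T = graphOf false false true := by
      ext x y
      fin_cases x <;> fin_cases y <;>
        (simp only [graphOf, SimpleGraph.fromRel_adj]; constructor <;> intro h <;>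
          first
            | decide
            | exact absurd h (by decide)
            | exact h01 | exact h01.symm | exact h12 | exact h12.symm
            | exact h02 | exact h02.symm | exact h03 | exact h03.symm
            | exact h14 | exact h14.symm
            | exact absurd (hle h) (by decide)
            | exact absurd h h01 | exact absurd h.symm h01
            | exact absurd h h12 | exact absurd h.symm h12
            | exact absurd h h02 | exact absurd h.symm h02)
    rw [hEq] at hcard
    have h5 : (graphOf false false true).edgeSet.ncard ≠ 4 := by
      rw [Set.ncard_eq_toFinset_card']; decide
    omega
  · exfalso
    have hEq : T = graphOf false false false := by
      ext x y
      fin_cases x <;> fin_cases y <;>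
        (simp only [graphOf, SimpleGraph.fromRel_adj]; constructor <;> intro h <;>
          first
            | decide
            | exact absurd h (by decide)
            | exact h01 | exact h01.symm | exact h12 | exact h12.symm
            | exact h02 | exact h02.symm | exact h03 | exact h03.symm
            | exact h14 | exact h14.symm
            | exact absurd (hle h) (by decide)
            | exact absurd h h01 | exact absurd h.symm h01
            | exact absurd h h12 | exact absurd h.symm h12
            | exact absurd h h02 | exact absurd h.symm h02)
    rw [hEq] at hcard
    have h5 : (graphOf false false false).edgeSet.ncard ≠ 4 := by
      rw [Set.ncard_eq_toFinset_card']; decide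
    omega
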